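/- Let p₁ > 0 and ω > 0, and consider the function g(η) = 4·(η·p₁² − 1)/(η²·ω²·p₁² + 4) on the domain η > 1/p₁². Then g attains its maximum over this domain at η† = (1/p₁²)·(1 + √(1 + 4·p₁²/ω²)), and the maximum value equals δ† = (√(ω² + 4·p₁²) − ω)/(2·ω); that is, g(η†) = δ† and g(η) ≤ δ† for all η > 1/p₁². -/

import Mathlib

open Real

/-- The function `g η = 4 (η p₁² - 1) / (η² ω² p₁² + 4)` attains its maximum over
`η > 1 / p₁²` at `η† = (1 / p₁²) (1 + √(1 + 4 p₁² / ω²))`, with maximum value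
`δ† = (√(ω² + 4 p₁²) - ω) / (2 ω)`. -/
theorem delta_dagger_is_maximum
    (p₁ ω : ℝ) (hp₁ : 0 < p₁) (hω : 0 < ω)
    (g : ℝ → ℝ)
    (hg : ∀ η : ℝ, g η = 4 * (η * p₁ ^ 2 - 1) / (η ^ 2 * ω ^ 2 * p₁ ^ 2 + 4))
    (ηd δd : ℝ)
    (hηd : ηd = (1 / p₁ ^ 2) * (1 + Real.sqrt (1 + 4 * p₁ ^ 2 / ω ^ 2)))
    (hδd : δd = (Real.sqrt (ω ^ 2 + 4 * p₁ ^ 2) - ω) / (2 * ω)) :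
    ηd > 1 / p₁ ^ 2 ∧ g ηd = δd ∧ ∀ η : ℝ, η > 1 / p₁ ^ 2 → g η ≤ δd := by
  set s := Real.sqrt (1 + 4 * p₁ ^ 2 / ω ^ 2) with hs
  have hωsq : (0:ℝ) < ω ^ 2 := by positivity
  have hpsq : (0:ℝ) < p₁ ^ 2 := by positivity
  have harg : (1:ℝ) < 1 + 4 * p₁ ^ 2 / ω ^ 2 := by
    have : 0 < 4 * p₁ ^ 2 / ω ^ 2 := by positivity
    linarith
  have hs1 : 1 < s := by
    rw [hs]
    have h := Real.sqrt_lt_sqrt (by norm_num : (0:ℝ) ≤ 1) harg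
    rwa [Real.sqrt_one] at h
  have hs2 : s ^ 2 * ω ^ 2 = ω ^ 2 + 4 * p₁ ^ 2 := by
    rw [hs, Real.sq_sqrt (by positivity)]
    field_simp
  have hsqrt2 : Real.sqrt (ω ^ 2 + 4 * p₁ ^ 2) = ω * s := by
    rw [← hs2, show s ^ 2 * ω ^ 2 = (ω * s) ^ 2 by ring,
      Real.sqrt_sq (by positivity)]
  have hδd' : δd = (s - 1) / 2 := by
    rw [hδd, hsqrt2]
    field_simp
  have hηd' : ηd * p₁ ^ 2 = 1 + s := by
    rw [hηd]; field_simp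
  refine ⟨?_, ?_, ?_⟩
  · rw [hηd]
    rw [gt_iff_lt, div_lt_iff₀ hpsq]
    nlinarith
  · rw [hg, hδd']
    have hden : ηd ^ 2 * ω ^ 2 * p₁ ^ 2 + 4 > 0 := by positivity
    rw [div_eq_div_iff (ne_of_gt hden) (by norm_num)]
    have hηd'' : ηd = (1 + s) / p₁ ^ 2 := by
      rw [hηd]; field_simp
    rw [hηd'']
    field_simp
    linear_combination (-(1 + s)) * hs2
  · intro η hη
    rw [hg, hδd']
    have hden : (0:ℝ) < η ^ 2 * ω ^ 2 * p₁ ^ 2 + 4 := by positivity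
    rw [div_le_div_iff₀ hden (by norm_num)]
    have hpos : 0 < (s - 1) * ω ^ 2 * p₁ ^ 2 := by
      have : 0 < s - 1 := by linarith
      positivity
    nlinarith [sq_nonneg ((s - 1) * ω ^ 2 * p₁ ^ 2 * η - 4 * p₁ ^ 2), hs2, hpos,
      mul_pos hωsq hpsq]
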